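/- Let A, B : ℝ → ℝ be functions such that B does not belong to the real linear span of the constant function 1 and A (i.e. there are no constants c₀, c₁ with B(u) = c₀ + c₁A(u) for all u). Let F : ℝ² → ℝ be twice continuously differentiable and suppose that for every (t,x) ∈ ℝ² and every u ∈ ℝ: A(u)·∂_x²F(t,x) − B(u)·∂_x F(t,x) + ∂_t F(t,x) = 0. Then F is constant on ℝ². (This is the classifying condition argument showing that for B ∉ ⟨A,1⟩ every local conservation law of the diffusion–convection equation has density proportional to u.) -/

import Mathlib

/-- Partial derivative with respect to the first (time) variable. -/
noncomputable def pT (f : ℝ → ℝ → ℝ) (t x : ℝ) : ℝ := deriv (fun s => f s x) t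

/-- Partial derivative with respect to the second (space) variable. -/
noncomputable def pX (f : ℝ → ℝ → ℝ) (t x : ℝ) : ℝ := deriv (fun y => f t y) x

/-- If `B ∉ ⟨1, A⟩` then every solution `F` of the classifying condition
`A(u) F_xx − B(u) F_x + F_t = 0` (for all values of `u`) is constant. -/
theorem classifying_condition_generic_case
    (A B : ℝ → ℝ)
    (hB : ¬ ∃ c0 c1 : ℝ, ∀ u : ℝ, B u = c0 + c1 * A u)
    (F : ℝ → ℝ → ℝ) (hF : ContDiff ℝ 2 (fun p : ℝ × ℝ => F p.1 p.2))
    (hcl : ∀ t x u : ℝ, A u * pX (pX F) t x - B u * pX F t x + pT F t x = 0) :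
    ∀ t x t' x' : ℝ, F t x = F t' x' := by
  -- Step 1: pX F = 0 everywhere
  have hx : ∀ t x : ℝ, pX F t x = 0 := by
    intro t x
    by_contra h
    apply hB
    refine ⟨pT F t x / pX F t x, pX (pX F) t x / pX F t x, fun u => ?_⟩
    have := hcl t x u
    field_simp
    linarith
  -- Step 2: second x-derivative vanishes
  have hxx : ∀ t x : ℝ, pX (pX F) t x = 0 := by
    intro t x
    have e : (fun y => pX F t y) = fun _ => (0 : ℝ) := funext (hx t)
    show deriv (fun y => pX F t y) x = 0
    rw [e]; simp
  -- Step 3: pT F = 0 everywhere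
  have ht : ∀ t x : ℝ, pT F t x = 0 := by
    intro t x
    have := hcl t x 0
    rw [hx, hxx] at this
    linarith
  -- Step 4: F constant
  set g : ℝ × ℝ → ℝ := fun p => F p.1 p.2 with hg
  have hdiff : Differentiable ℝ g := hF.differentiable (by norm_num)
  have hpT : ∀ t x : ℝ, pT F t x = fderiv ℝ g (t, x) (1, 0) := by
    intro t x
    have hd : HasDerivAt (fun s => F s x) (fderiv ℝ g (t, x) (1, 0)) t := by
      have := (hdiff (t, x)).hasFDerivAt.comp_hasDerivAt t
        (HasDerivAt.prodMk (hasDerivAt_id t) (hasDerivAt_const t x))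
      exact this
    exact hd.deriv
  have hpX : ∀ t x : ℝ, pX F t x = fderiv ℝ g (t, x) (0, 1) := by
    intro t x
    have hd : HasDerivAt (fun y => F t y) (fderiv ℝ g (t, x) (0, 1)) x :=
      (hdiff (t, x)).hasFDerivAt.comp_hasDerivAt x
        (HasDerivAt.prodMk (hasDerivAt_const x t) (hasDerivAt_id x))
    exact hd.deriv
  have hfz : ∀ p : ℝ × ℝ, fderiv ℝ g p = 0 := by
    intro p
    refine ContinuousLinearMap.ext fun v => ?_
    have hv : v = v.1 • ((1 : ℝ), (0 : ℝ)) + v.2 • ((0 : ℝ), (1 : ℝ)) := by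
      ext <;> simp
    have h1 : fderiv ℝ g p ((1 : ℝ), (0 : ℝ)) = 0 := by
      rw [← hpT p.1 p.2]; exact ht p.1 p.2
    have h2 : fderiv ℝ g p ((0 : ℝ), (1 : ℝ)) = 0 := by
      rw [← hpX p.1 p.2]; exact hx p.1 p.2
    rw [hv, map_add, map_smul, map_smul, h1, h2]
    simp
  intro t x t' x'
  exact is_const_of_fderiv_eq_zero hdiff hfz (t, x) (t', x')
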